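/- Let 0 < q < 1, δ ∈ {0,1,2}, μ > 0, and λ ∈ ℂ with (q^{2λ+2};q²)_k ≠ 0 for all k ≥ 0. Define ℱ(x) = ∑_{k=0}^∞ q^{(2−δ)k(k+λ)−kδ} (1−q²)^{2k} (μx)^{λ+2k} / ((q²;q²)_k (q^{2λ+2};q²)_k) for x > 0, where (μx)^{λ} = exp(λ ln(μx)). For δ ∈ {0,1} the series converges for every x > 0; for δ = 2 assume (1−q²)μx < q² so that all series below converge absolutely. Then ℱ satisfies the second-order q-difference equation ℱ(q^{−1}x) − (q^{λ} + q^{−λ}) ℱ(x) + ℱ(qx) − μ² q^{−2δ} (1−q²)² x² ℱ(q^{1−δ}x) = 0. In particular, the three types of modified q²-Bessel functions are eigenfunctions of the two-body relativistic open Toda Hamiltonian. -/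

import Mathlib

/-- The finite q-Pochhammer symbol `(a;Q)_n = ∏_{j<n} (1 − a Q^j)`. -/
noncomputable def qPoch (Q a : ℂ) (n : ℕ) : ℂ :=
  ∏ j ∈ Finset.range n, (1 - a * Q ^ j)

/-- `q^w = exp(w ln q)` for real `q > 0` and complex `w`. -/
noncomputable def qpow (q : ℝ) (w : ℂ) : ℂ := Complex.exp (w * (Real.log q : ℂ))

/-- The `k`-th term of the series
`ℱ(x) = ∑_k q^{(2−δ)k(k+λ)−kδ}(1−q²)^{2k}(μx)^{λ+2k}/((q²;q²)_k (q^{2λ+2};q²)_k)`. -/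
noncomputable def todaTerm (q : ℝ) (δ : ℕ) (μ : ℝ) (lam : ℂ) (x : ℝ) (k : ℕ) : ℂ :=
  qpow q ((2 - (δ : ℂ)) * k * (k + lam) - k * (δ : ℂ)) * (1 - (q : ℂ) ^ 2) ^ (2 * k)
    * Complex.exp ((lam + 2 * (k : ℂ)) * (Real.log (μ * x) : ℂ))
    / (qPoch ((q : ℂ) ^ 2) ((q : ℂ) ^ 2) k * qPoch ((q : ℂ) ^ 2) (qpow q (2 * lam + 2)) k)

/-- `ℱ(x)`, the modified q²-Bessel function of type `j` up to normalization. -/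
noncomputable def todaF (q : ℝ) (δ : ℕ) (μ : ℝ) (lam : ℂ) (x : ℝ) : ℂ :=
  ∑' k : ℕ, todaTerm q δ μ lam x k

lemma qpow_add (q : ℝ) (a b : ℂ) : qpow q (a + b) = qpow q a * qpow q b := by
  simp [qpow, add_mul, Complex.exp_add]

lemma qpow_congr (q : ℝ) {a b : ℂ} (h : a = b) : qpow q a = qpow q b := by rw [h]

lemma qpow_ne_zero (q : ℝ) (w : ℂ) : qpow q w ≠ 0 := Complex.exp_ne_zero _

lemma qpow_natCast (q : ℝ) (hq : 0 < q) (n : ℕ) : qpow q (n : ℂ) = (q : ℂ) ^ n := by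
  rw [qpow, Complex.exp_nat_mul, ← Complex.ofReal_exp, Real.exp_log hq]

lemma qPoch_succ (Q a : ℂ) (k : ℕ) : qPoch Q a (k+1) = qPoch Q a k * (1 - a * Q ^ k) :=
  Finset.prod_range_succ _ _

lemma factor1_ne (q : ℝ) (hq0 : 0 < q) (hq1 : q < 1) (j : ℕ) :
    1 - (q:ℂ)^2 * ((q:ℂ)^2)^j ≠ 0 := by
  have h : (1:ℂ) - (q:ℂ)^2 * ((q:ℂ)^2)^j = ((1 - q^2 * (q^2)^j : ℝ) : ℂ) := by push_cast; ring
  rw [h]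
  have h2 : q^2 < 1 := by nlinarith
  have h3 : (q^2)^j ≤ 1 := pow_le_one₀ (by positivity) h2.le
  have h4 : (0:ℝ) < 1 - q^2 * (q^2)^j := by nlinarith [pow_pos (show (0:ℝ) < q^2 by positivity) j]
  exact_mod_cast h4.ne'

lemma qPoch1_ne (q : ℝ) (hq0 : 0 < q) (hq1 : q < 1) (k : ℕ) :
    qPoch ((q:ℂ)^2) ((q:ℂ)^2) k ≠ 0 :=
  Finset.prod_ne_zero_iff.2 fun j _ => factor1_ne q hq0 hq1 j

lemma factor2_ne (q : ℝ) (lam : ℂ)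
    (hpoch : ∀ k, qPoch ((q:ℂ)^2) (qpow q (2*lam+2)) k ≠ 0) (k : ℕ) :
    1 - qpow q (2*lam+2) * ((q:ℂ)^2)^k ≠ 0 := by
  have := hpoch (k+1)
  rw [qPoch_succ] at this
  exact right_ne_zero_of_mul this

lemma todaTerm_succ (q : ℝ) (hq0 : 0 < q) (hq1 : q < 1) (δ : ℕ) (μ : ℝ) (lam : ℂ)
    (hpoch : ∀ k, qPoch ((q:ℂ)^2) (qpow q (2*lam+2)) k ≠ 0) (y : ℝ) (k : ℕ) :
    todaTerm q δ μ lam y (k+1) =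
      qpow q ((2 - (δ:ℂ)) * (2*(k:ℂ)+1+lam) - (δ:ℂ)) * (1 - (q:ℂ)^2)^2
        * Complex.exp (2 * (Real.log (μ*y) : ℂ))
        / ((1 - (q:ℂ)^2 * ((q:ℂ)^2)^k) * (1 - qpow q (2*lam+2) * ((q:ℂ)^2)^k))
        * todaTerm q δ μ lam y k := by
  have hf1 := factor1_ne q hq0 hq1 k
  have hf2 := factor2_ne q lam hpoch k
  have hP1 := qPoch1_ne q hq0 hq1 k
  have hP2 := hpoch k
  unfold todaTerm
  rw [qPoch_succ, qPoch_succ]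
  have h1 : qpow q ((2-(δ:ℂ))*((k+1:ℕ):ℂ)*(((k+1:ℕ):ℂ)+lam) - ((k+1:ℕ):ℂ)*(δ:ℂ))
      = qpow q ((2-(δ:ℂ))*(2*(k:ℂ)+1+lam) - (δ:ℂ)) * qpow q ((2-(δ:ℂ))*(k:ℂ)*((k:ℂ)+lam) - (k:ℂ)*(δ:ℂ)) := by
    rw [← qpow_add]; apply qpow_congr; push_cast; ring
  have h2 : Complex.exp ((lam + 2*((k+1:ℕ):ℂ)) * (Real.log (μ*y):ℂ))
      = Complex.exp (2*(Real.log (μ*y):ℂ)) * Complex.exp ((lam + 2*(k:ℂ))*(Real.log (μ*y):ℂ)) := by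
    rw [← Complex.exp_add]; congr 1; push_cast; ring
  have h3 : (1 - (q:ℂ)^2)^(2*(k+1)) = (1 - (q:ℂ)^2)^2 * (1 - (q:ℂ)^2)^(2*k) := by
    rw [show 2*(k+1) = 2 + 2*k from by ring, pow_add]
  rw [h1, h2, h3]
  field_simp

lemma todaTerm_scale (q : ℝ) (hq0 : 0 < q) (δ : ℕ) (μ : ℝ) (hμ : 0 < μ) (lam : ℂ)
    (x : ℝ) (hx : 0 < x) (s : ℝ) (k : ℕ) :
    todaTerm q δ μ lam (q ^ s * x) k
      = qpow q ((s:ℂ) * (lam + 2*(k:ℂ))) * todaTerm q δ μ lam x k := by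
  unfold todaTerm
  have hlog : Real.log (μ * (q ^ s * x)) = s * Real.log q + Real.log (μ * x) := by
    rw [show μ * (q^s*x) = q^s * (μ*x) by ring,
      Real.log_mul (by positivity) (by positivity), Real.log_rpow hq0]
  rw [hlog]
  have h2 : Complex.exp ((lam + 2*(k:ℂ)) * ((s * Real.log q + Real.log (μ*x) : ℝ) : ℂ))
      = qpow q ((s:ℂ) * (lam + 2*(k:ℂ)))
        * Complex.exp ((lam + 2*(k:ℂ)) * ((Real.log (μ*x) : ℝ) : ℂ)) := by
    rw [qpow, ← Complex.exp_add]; congr 1; push_cast; ring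
  rw [h2]; ring

/-- The core `qpow` identity behind the q-difference equation. -/
lemma toda_core (q : ℝ) (δ : ℕ) (lam : ℂ) (k : ℕ) :
    (qpow q (-(lam+2*(k:ℂ)+2)) - qpow q lam - qpow q (-lam) + qpow q (lam+2*(k:ℂ)+2)) *
      qpow q ((2-(δ:ℂ))*(2*(k:ℂ)+1+lam) - (δ:ℂ))
    = qpow q (-(2*(δ:ℂ))) * qpow q ((1-(δ:ℂ))*(lam+2*(k:ℂ)))
        * ((1 - qpow q (2*(k:ℂ)+2)) * (1 - qpow q (2*lam+2*(k:ℂ)+2))) := by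
  simp only [qpow, ← Complex.exp_add, sub_mul, mul_sub, add_mul, mul_add, mul_one, one_mul,
    ← add_mul]
  ring_nf
  simp only [← Complex.exp_add]
  ring_nf

/-- The coefficient identity: the three-term part applied to term `k+1` produces exactly
the right-hand side coefficient applied to term `k`. -/
lemma toda_key (q : ℝ) (hq0 : 0 < q) (hq1 : q < 1) (δ : ℕ) (μ : ℝ) (hμ : 0 < μ) (lam : ℂ)
    (hpoch : ∀ k, qPoch ((q:ℂ)^2) (qpow q (2*lam+2)) k ≠ 0) (x : ℝ) (hx : 0 < x) (k : ℕ) :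
    (qpow q (-(lam+2*(k:ℂ)+2)) - qpow q lam - qpow q (-lam) + qpow q (lam+2*(k:ℂ)+2)) *
      (qpow q ((2-(δ:ℂ))*(2*(k:ℂ)+1+lam) - (δ:ℂ)) * (1 - (q:ℂ)^2)^2
        * Complex.exp (2 * (Real.log (μ*x) : ℂ))
        / ((1 - (q:ℂ)^2 * ((q:ℂ)^2)^k) * (1 - qpow q (2*lam+2) * ((q:ℂ)^2)^k)))
    = (μ:ℂ)^2 * qpow q (-(2*(δ:ℂ))) * (1 - (q:ℂ)^2)^2 * (x:ℂ)^2
        * qpow q ((1-(δ:ℂ))*(lam+2*(k:ℂ))) := by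
  have hf1 := factor1_ne q hq0 hq1 k
  have hf2 := factor2_ne q lam hpoch k
  have hexp : Complex.exp (2 * (Real.log (μ*x) : ℂ)) = (μ:ℂ)^2 * (x:ℂ)^2 := by
    rw [show (2:ℂ) * (Real.log (μ*x):ℂ) = (Real.log (μ*x):ℂ) + (Real.log (μ*x):ℂ) from by ring,
      Complex.exp_add, ← Complex.ofReal_exp, Real.exp_log (by positivity)]
    push_cast; ring
  have hq2k : (q:ℂ)^2 * ((q:ℂ)^2)^k = qpow q (2*(k:ℂ)+2) := by
    rw [← pow_mul, ← pow_add, ← qpow_natCast q hq0 (2+2*k)]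
    exact (qpow_congr q (by push_cast; ring)).symm
  have hQ2k : qpow q (2*lam+2) * ((q:ℂ)^2)^k = qpow q (2*lam+2*(k:ℂ)+2) := by
    rw [← pow_mul, ← qpow_natCast q hq0 (2*k), ← qpow_add]
    exact qpow_congr q (by push_cast; ring)
  rw [hq2k] at hf1
  rw [hQ2k] at hf2
  have hne := mul_ne_zero hf1 hf2
  rw [hexp]
  rw [show ∀ a b c e dd : ℂ, a * (b * c * e / dd) = (a * b) * (c * e) / dd from
    fun a b c e dd => by ring]
  rw [toda_core q δ lam k, hq2k, hQ2k, div_eq_iff hne]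
  ring

open Filter in
lemma summable_toda (q : ℝ) (hq0 : 0 < q) (hq1 : q < 1) (δ : ℕ) (hδ : δ = 0 ∨ δ = 1 ∨ δ = 2)
    (μ : ℝ) (hμ : 0 < μ) (lam : ℂ) (hpoch : ∀ k, qPoch ((q:ℂ)^2) (qpow q (2*lam+2)) k ≠ 0)
    (y : ℝ) (hy : 0 < y) (hcond : δ = 2 → (1 - q^2)*μ*y < q) :
    Summable (todaTerm q δ μ lam y) := by
  set Nn : ℝ := ‖(1 - (q:ℂ)^2)^2‖ * ‖Complex.exp (2 * (Real.log (μ*y) : ℂ))‖ with hNn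
  set dn : ℕ → ℝ := fun k =>
    ‖(1 - (q:ℂ)^2 * ((q:ℂ)^2)^k) * (1 - qpow q (2*lam+2) * ((q:ℂ)^2)^k)‖ with hdn
  set F : ℕ → ℂ := fun k =>
    qpow q ((2 - (δ:ℂ)) * (2*(k:ℂ)+1+lam) - (δ:ℂ)) * (1 - (q:ℂ)^2)^2
      * Complex.exp (2 * (Real.log (μ*y) : ℂ))
      / ((1 - (q:ℂ)^2 * ((q:ℂ)^2)^k) * (1 - qpow q (2*lam+2) * ((q:ℂ)^2)^k)) with hFdef
  have hF : ∀ k, todaTerm q δ μ lam y (k+1) = F k * todaTerm q δ μ lam y k :=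
    fun k => todaTerm_succ q hq0 hq1 δ μ lam hpoch y k
  have hFnorm : ∀ k, ‖F k‖ =
      ‖qpow q ((2 - (δ:ℂ)) * (2*(k:ℂ)+1+lam) - (δ:ℂ))‖ * Nn / dn k := by
    intro k
    simp [hFdef, hNn, hdn, norm_div, norm_mul, mul_assoc]
  have hqn : ‖(q:ℂ)^2‖ < 1 := by
    rw [norm_pow, Complex.norm_real, Real.norm_eq_abs, abs_of_pos hq0]; nlinarith
  have hpk : Tendsto (fun k : ℕ => ((q:ℂ)^2)^k) atTop (nhds 0) :=
    tendsto_pow_atTop_nhds_zero_of_norm_lt_one hqn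
  have hd : Tendsto dn atTop (nhds 1) := by
    have h1 := (((hpk.const_mul ((q:ℂ)^2)).const_sub 1).mul
      ((hpk.const_mul (qpow q (2*lam+2))).const_sub 1)).norm
    simpa [hdn] using h1
  obtain ⟨r, hr1, hev⟩ : ∃ r : ℝ, r < 1 ∧ ∀ᶠ k in atTop, ‖F k‖ ≤ r := by
    rcases hδ with h0 | h0 | h0 <;> subst h0
    · -- δ = 0
      have hsplit : ∀ k : ℕ, ‖qpow q ((2 - ((0:ℕ):ℂ)) * (2*(k:ℂ)+1+lam) - ((0:ℕ):ℂ))‖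
          = (q^4)^k * ‖qpow q (2*lam + 2)‖ := by
        intro k
        rw [show ((2 - ((0:ℕ):ℂ)) * (2*(k:ℂ)+1+lam) - ((0:ℕ):ℂ))
            = ((4*k : ℕ) : ℂ) + (2*lam + 2) from by push_cast; ring,
          qpow_add, qpow_natCast q hq0, norm_mul, norm_pow, Complex.norm_real,
          Real.norm_eq_abs, abs_of_pos hq0, ← pow_mul, pow_mul']
      have hnum : Tendsto (fun k => ‖F k‖) atTop (nhds 0) := by
        have hg : Tendsto (fun k : ℕ => (q^4)^k * ‖qpow q (2*lam+2)‖) atTop (nhds 0) := by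
          have := (tendsto_pow_atTop_nhds_zero_of_lt_one (by positivity)
            (show q^4 < 1 from pow_lt_one₀ hq0.le hq1 (by norm_num))).mul_const ‖qpow q (2*lam+2)‖
          simpa using this
        have h2 : Tendsto (fun k => ((q^4)^k * ‖qpow q (2*lam+2)‖ * Nn) / dn k)
            atTop (nhds 0) := by
          have := (hg.mul_const Nn).div hd (by norm_num : (1:ℝ) ≠ 0)
          simpa [Pi.div_def] using this
        exact h2.congr fun k => by rw [hFnorm k, hsplit k]
      exact ⟨1/2, by norm_num,
        (hnum.eventually_lt_const (show (0:ℝ) < 1/2 by norm_num)).mono fun k hk => hk.le⟩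
    · -- δ = 1
      have hsplit : ∀ k : ℕ, ‖qpow q ((2 - ((1:ℕ):ℂ)) * (2*(k:ℂ)+1+lam) - ((1:ℕ):ℂ))‖
          = (q^2)^k * ‖qpow q (lam)‖ := by
        intro k
        rw [show ((2 - ((1:ℕ):ℂ)) * (2*(k:ℂ)+1+lam) - ((1:ℕ):ℂ))
            = ((2*k : ℕ) : ℂ) + lam from by push_cast; ring,
          qpow_add, qpow_natCast q hq0, norm_mul, norm_pow, Complex.norm_real,
          Real.norm_eq_abs, abs_of_pos hq0, ← pow_mul, pow_mul']
      have hnum : Tendsto (fun k => ‖F k‖) atTop (nhds 0) := by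
        have hg : Tendsto (fun k : ℕ => (q^2)^k * ‖qpow q lam‖) atTop (nhds 0) := by
          have := (tendsto_pow_atTop_nhds_zero_of_lt_one (by positivity)
            (show q^2 < 1 from pow_lt_one₀ hq0.le hq1 (by norm_num))).mul_const ‖qpow q lam‖
          simpa using this
        have h2 : Tendsto (fun k => ((q^2)^k * ‖qpow q lam‖ * Nn) / dn k)
            atTop (nhds 0) := by
          have := (hg.mul_const Nn).div hd (by norm_num : (1:ℝ) ≠ 0)
          simpa [Pi.div_def] using this
        exact h2.congr fun k => by rw [hFnorm k, hsplit k]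
      exact ⟨1/2, by norm_num,
        (hnum.eventually_lt_const (show (0:ℝ) < 1/2 by norm_num)).mono fun k hk => hk.le⟩
    · -- δ = 2
      have hc := hcond rfl
      have hsplit : ∀ k : ℕ, ‖qpow q ((2 - ((2:ℕ):ℂ)) * (2*(k:ℂ)+1+lam) - ((2:ℕ):ℂ))‖
          = ‖qpow q (-2)‖ := by
        intro k
        exact congrArg _ (qpow_congr q (by push_cast; ring))
      set L : ℝ := ‖qpow q (-2)‖ * Nn with hL
      have hnum : Tendsto (fun k => ‖F k‖) atTop (nhds L) := by
        have h2 : Tendsto (fun k => (‖qpow q (-2)‖ * Nn) / dn k) atTop (nhds L) := by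
          have := (tendsto_const_nhds (x := ‖qpow q (-2)‖ * Nn)
            (f := atTop (α := ℕ))).div hd (by norm_num : (1:ℝ) ≠ 0)
          simpa [hL, Pi.div_def] using this
        exact h2.congr fun k => by rw [hFnorm k, hsplit k]
      have hLval : L = (q^2)⁻¹ * ((1 - q^2)^2 * (μ*y)^2) := by
        have h1 : ‖qpow q (-2 : ℂ)‖ = (q^2)⁻¹ := by
          rw [qpow, Complex.norm_exp]
          have : ((-2 : ℂ) * (Real.log q : ℂ)).re = -(Real.log (q^2)) := by
            rw [Real.log_pow]; simp [Complex.mul_re]; try ring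
          rw [this, Real.exp_neg, Real.exp_log (by positivity)]
        have h2 : ‖(1 - (q:ℂ)^2)^2‖ = (1 - q^2)^2 := by
          rw [norm_pow, show (1 : ℂ) - (q:ℂ)^2 = ((1 - q^2 : ℝ) : ℂ) from by push_cast; ring,
            Complex.norm_real, Real.norm_eq_abs, abs_of_pos (by nlinarith)]
        have h3 : ‖Complex.exp (2 * (Real.log (μ*y) : ℂ))‖ = (μ*y)^2 := by
          rw [Complex.norm_exp]
          have : ((2 : ℂ) * (Real.log (μ*y) : ℂ)).re = Real.log ((μ*y)^2) := by
            rw [Real.log_pow]; simp [Complex.mul_re]; try ring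
          rw [this, Real.exp_log (by positivity)]
        rw [hL, hNn, h1, h2, h3]
      have hL1 : L < 1 := by
        rw [hLval]
        have h0 : 0 ≤ (1 - q^2) * (μ*y) :=
          le_of_lt (mul_pos (by nlinarith) (mul_pos hμ hy))
        have hsq : ((1 - q^2) * (μ*y))^2 < q^2 := by nlinarith
        have hq2 : (0:ℝ) < q^2 := by positivity
        rw [inv_mul_lt_iff₀ hq2]
        nlinarith
      have hL0 : 0 ≤ L := by positivity
      exact ⟨(L+1)/2, by linarith,
        (hnum.eventually_lt_const (by linarith)).mono fun k hk => hk.le⟩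
  apply summable_of_ratio_norm_eventually_le hr1
  filter_upwards [hev] with k hk
  rw [hF k, norm_mul]
  exact mul_le_mul_of_nonneg_right hk (norm_nonneg _)

/-- The three types of modified q²-Bessel functions are eigenfunctions of the
two-body relativistic open Toda Hamiltonian: for `δ ∈ {0,1,2}` the series
`ℱ(x)` converges (for every `x > 0` when `δ ∈ {0,1}`; for `δ = 2` under the
assumption `(1−q²)μx < q²`) and satisfies
`ℱ(q⁻¹x) − (q^λ + q^{−λ})ℱ(x) + ℱ(qx) − μ²q^{−2δ}(1−q²)²x²ℱ(q^{1−δ}x) = 0`. -/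
theorem toda_qdifference_equation (q : ℝ) (hq0 : 0 < q) (hq1 : q < 1)
    (δ : ℕ) (hδ : δ = 0 ∨ δ = 1 ∨ δ = 2) (μ : ℝ) (hμ : 0 < μ) (lam : ℂ)
    (hpoch : ∀ k : ℕ, qPoch ((q : ℂ) ^ 2) (qpow q (2 * lam + 2)) k ≠ 0)
    (x : ℝ) (hx : 0 < x) (hδ2 : δ = 2 → (1 - q ^ 2) * μ * x < q ^ 2) :
    Summable (todaTerm q δ μ lam (q⁻¹ * x)) ∧
    Summable (todaTerm q δ μ lam x) ∧
    Summable (todaTerm q δ μ lam (q * x)) ∧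
    todaF q δ μ lam (q⁻¹ * x)
      - (qpow q lam + qpow q (-lam)) * todaF q δ μ lam x
      + todaF q δ μ lam (q * x)
      - (μ : ℂ) ^ 2 * qpow q (-(2 * (δ : ℂ))) * (1 - (q : ℂ) ^ 2) ^ 2 * (x : ℂ) ^ 2
          * todaF q δ μ lam (q ^ ((1 : ℝ) - (δ : ℝ)) * x) = 0 := by
  have hs1 : Summable (todaTerm q δ μ lam (q⁻¹ * x)) := by
    refine summable_toda q hq0 hq1 δ hδ μ hμ lam hpoch _ (by positivity) fun h2 => ?_
    have h := hδ2 h2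
    have hkey : (1-q^2)*μ*(q⁻¹*x) = ((1-q^2)*μ*x)/q := by field_simp; try ring
    rw [hkey, div_lt_iff₀ hq0]; nlinarith
  have hs2 : Summable (todaTerm q δ μ lam x) := by
    refine summable_toda q hq0 hq1 δ hδ μ hμ lam hpoch _ hx fun h2 => ?_
    have h := hδ2 h2
    nlinarith
  have hs3 : Summable (todaTerm q δ μ lam (q * x)) := by
    refine summable_toda q hq0 hq1 δ hδ μ hμ lam hpoch _ (by positivity) fun h2 => ?_
    have h := hδ2 h2
    nlinarith [mul_pos hμ hx]
  have hs4 : Summable (todaTerm q δ μ lam (q ^ ((1 : ℝ) - (δ : ℝ)) * x)) := by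
    refine summable_toda q hq0 hq1 δ hδ μ hμ lam hpoch _
      (mul_pos (Real.rpow_pos_of_pos hq0 _) hx) fun h2 => ?_
    have h := hδ2 h2
    have hrw : q ^ ((1 : ℝ) - (δ : ℝ)) = q⁻¹ := by
      rw [h2, show (1:ℝ) - ((2:ℕ):ℝ) = -1 from by norm_num, Real.rpow_neg_one]
    rw [hrw]
    have hkey : (1-q^2)*μ*(q⁻¹*x) = ((1-q^2)*μ*x)/q := by field_simp; try ring
    rw [hkey, div_lt_iff₀ hq0]; nlinarith
  refine ⟨hs1, hs2, hs3, ?_⟩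
  -- notation
  set T : ℕ → ℂ := todaTerm q δ μ lam x with hT
  set c : ℂ := qpow q lam + qpow q (-lam) with hc
  set C : ℂ := (μ:ℂ)^2 * qpow q (-(2*(δ:ℂ))) * (1 - (q:ℂ)^2)^2 * (x:ℂ)^2 with hC
  -- scaling identities
  have e1 : q⁻¹ * x = q ^ (-1 : ℝ) * x := by rw [Real.rpow_neg_one]
  have e3 : q * x = q ^ (1 : ℝ) * x := by rw [Real.rpow_one]
  have hA : ∀ k, todaTerm q δ μ lam (q⁻¹*x) k
      = qpow q (Complex.ofReal (-1) * (lam + 2*(k:ℂ))) * T k := by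
    intro k; rw [e1]; exact todaTerm_scale q hq0 δ μ hμ lam x hx (-1) k
  have hB : ∀ k, todaTerm q δ μ lam (q*x) k
      = qpow q (Complex.ofReal 1 * (lam + 2*(k:ℂ))) * T k := by
    intro k; rw [e3]; exact todaTerm_scale q hq0 δ μ hμ lam x hx 1 k
  have hD : ∀ k, todaTerm q δ μ lam (q ^ ((1 : ℝ) - (δ : ℝ)) * x) k
      = qpow q (Complex.ofReal ((1:ℝ) - (δ:ℝ)) * (lam + 2*(k:ℂ))) * T k := by
    intro k; exact todaTerm_scale q hq0 δ μ hμ lam x hx ((1:ℝ) - (δ:ℝ)) k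
  have hA' : Summable (fun k : ℕ => qpow q (Complex.ofReal (-1) * (lam + 2*(k:ℂ))) * T k) :=
    hs1.congr hA
  have hB' : Summable (fun k : ℕ => qpow q (Complex.ofReal 1 * (lam + 2*(k:ℂ))) * T k) :=
    hs3.congr hB
  have hD' : Summable (fun k : ℕ => qpow q (Complex.ofReal ((1:ℝ) - (δ:ℝ)) * (lam + 2*(k:ℂ))) * T k) :=
    hs4.congr hD
  have hcT : Summable (fun k => c * T k) := hs2.mul_left c
  -- the combined series
  set a : ℕ → ℂ := fun k : ℕ =>
    qpow q (Complex.ofReal (-1) * (lam + 2*(k:ℂ))) * T k - c * T k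
      + qpow q (Complex.ofReal 1 * (lam + 2*(k:ℂ))) * T k with ha
  have hsa : Summable a := (hA'.sub hcT).add hB'
  have hstep1 : todaF q δ μ lam (q⁻¹ * x) - c * todaF q δ μ lam x + todaF q δ μ lam (q * x)
      = ∑' k, a k := by
    rw [todaF, todaF, todaF, tsum_congr hA, tsum_congr hB, ← tsum_mul_left,
      ← Summable.tsum_sub hA' hcT, ← Summable.tsum_add (hA'.sub hcT) hB']
  have hstep2 : C * todaF q δ μ lam (q ^ ((1 : ℝ) - (δ : ℝ)) * x)
      = ∑' k : ℕ, C * (qpow q (Complex.ofReal ((1:ℝ) - (δ:ℝ)) * (lam + 2*(k:ℂ))) * T k) := by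
    rw [todaF, tsum_congr hD, ← tsum_mul_left]
  -- first term vanishes
  have ha0 : a 0 = 0 := by
    have h1 : qpow q (Complex.ofReal (-1) * (lam + 2*((0:ℕ):ℂ))) = qpow q (-lam) :=
      qpow_congr q (by push_cast; ring)
    have h2 : qpow q (Complex.ofReal 1 * (lam + 2*((0:ℕ):ℂ))) = qpow q lam :=
      qpow_congr q (by push_cast; ring)
    rw [ha]; simp only [h1, h2, hc]; ring
  -- shift identity
  have hshift : ∀ k, a (k+1)
      = C * (qpow q (Complex.ofReal ((1:ℝ) - (δ:ℝ)) * (lam + 2*(k:ℂ))) * T k) := by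
    intro k
    have hTs : T (k+1) =
        qpow q ((2 - (δ:ℂ)) * (2*(k:ℂ)+1+lam) - (δ:ℂ)) * (1 - (q:ℂ)^2)^2
          * Complex.exp (2 * (Real.log (μ*x) : ℂ))
          / ((1 - (q:ℂ)^2 * ((q:ℂ)^2)^k) * (1 - qpow q (2*lam+2) * ((q:ℂ)^2)^k)) * T k :=
      todaTerm_succ q hq0 hq1 δ μ lam hpoch x k
    have h1 : qpow q (Complex.ofReal (-1) * (lam + 2*(((k+1):ℕ):ℂ))) = qpow q (-(lam+2*(k:ℂ)+2)) :=
      qpow_congr q (by push_cast; ring)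
    have h2 : qpow q (Complex.ofReal 1 * (lam + 2*(((k+1):ℕ):ℂ))) = qpow q (lam+2*(k:ℂ)+2) :=
      qpow_congr q (by push_cast; ring)
    have h3 : qpow q (Complex.ofReal ((1:ℝ) - (δ:ℝ)) * (lam + 2*(k:ℂ)))
        = qpow q ((1-(δ:ℂ))*(lam+2*(k:ℂ))) :=
      qpow_congr q (by push_cast; ring)
    rw [ha]
    simp only [h1, h2, h3, hTs, hc, hC]
    have := toda_key q hq0 hq1 δ μ hμ lam hpoch x hx k
    calc (qpow q (-(lam+2*(k:ℂ)+2))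
            * (qpow q ((2 - (δ:ℂ)) * (2*(k:ℂ)+1+lam) - (δ:ℂ)) * (1 - (q:ℂ)^2)^2
              * Complex.exp (2 * (Real.log (μ*x) : ℂ))
              / ((1 - (q:ℂ)^2 * ((q:ℂ)^2)^k) * (1 - qpow q (2*lam+2) * ((q:ℂ)^2)^k)) * T k)
          - (qpow q lam + qpow q (-lam))
            * (qpow q ((2 - (δ:ℂ)) * (2*(k:ℂ)+1+lam) - (δ:ℂ)) * (1 - (q:ℂ)^2)^2
              * Complex.exp (2 * (Real.log (μ*x) : ℂ))
              / ((1 - (q:ℂ)^2 * ((q:ℂ)^2)^k) * (1 - qpow q (2*lam+2) * ((q:ℂ)^2)^k)) * T k)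
          + qpow q (lam+2*(k:ℂ)+2)
            * (qpow q ((2 - (δ:ℂ)) * (2*(k:ℂ)+1+lam) - (δ:ℂ)) * (1 - (q:ℂ)^2)^2
              * Complex.exp (2 * (Real.log (μ*x) : ℂ))
              / ((1 - (q:ℂ)^2 * ((q:ℂ)^2)^k) * (1 - qpow q (2*lam+2) * ((q:ℂ)^2)^k)) * T k))
        = ((qpow q (-(lam+2*(k:ℂ)+2)) - qpow q lam - qpow q (-lam) + qpow q (lam+2*(k:ℂ)+2)) *
            (qpow q ((2-(δ:ℂ))*(2*(k:ℂ)+1+lam) - (δ:ℂ)) * (1 - (q:ℂ)^2)^2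
              * Complex.exp (2 * (Real.log (μ*x) : ℂ))
              / ((1 - (q:ℂ)^2 * ((q:ℂ)^2)^k) * (1 - qpow q (2*lam+2) * ((q:ℂ)^2)^k)))) * T k := by
          ring
      _ = ((μ:ℂ)^2 * qpow q (-(2*(δ:ℂ))) * (1 - (q:ℂ)^2)^2 * (x:ℂ)^2
            * qpow q ((1-(δ:ℂ))*(lam+2*(k:ℂ)))) * T k := by rw [this]
      _ = (μ:ℂ)^2 * qpow q (-(2*(δ:ℂ))) * (1 - (q:ℂ)^2)^2 * (x:ℂ)^2
            * (qpow q ((1-(δ:ℂ))*(lam+2*(k:ℂ))) * T k) := by ring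
  -- conclude
  rw [hstep1, hstep2]
  rw [Summable.tsum_eq_zero_add hsa, ha0, zero_add, tsum_congr hshift]
  exact sub_self _
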